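/- Let N be a finite set, let g be a monotone submodular set function on N with g(∅) = 0, and let k ≥ 1. Let ∅ = S₀ ⊆ S₁ ⊆ … ⊆ S_k be a greedy chain, i.e., for each i < k, S_{i+1} = S_i ∪ {s_i} where s_i ∈ N maximizes g(S_i ∪ {s}) over all s ∈ N. Then g(S_k) ≥ (1 − 1/e) · max { g(A) : A ⊆ N, |A| = k }, where e is Euler's number. -/
import Mathlib


/-- A set function `g` on the ground set `N` is submodular if for all `A ⊆ B ⊆ N` and all
`s ∈ N \ B`, `g(A ∪ {s}) − g(A) ≥ g(B ∪ {s}) − g(B)`. -/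
def SubmodularOn {α : Type*} [DecidableEq α] (N : Finset α) (g : Finset α → ℝ) : Prop :=
  ∀ A B : Finset α, A ⊆ B → B ⊆ N → ∀ s ∈ N, s ∉ B →
    g (B ∪ {s}) - g B ≤ g (A ∪ {s}) - g A

/-- A set function `g` on the ground set `N` is monotone if `A ⊆ B ⊆ N` implies
`g(A) ≤ g(B)`. -/
def MonotoneSetFn {α : Type*} (N : Finset α) (g : Finset α → ℝ) : Prop :=
  ∀ A B : Finset α, A ⊆ B → B ⊆ N → g A ≤ g B

lemma marginal_sum {α : Type*} [DecidableEq α] (N : Finset α) (g : Finset α → ℝ)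
    (hsub : SubmodularOn N g) (T : Finset α) :
    T ⊆ N → ∀ B ⊆ N, g (B ∪ T) - g B ≤ ∑ a ∈ T \ B, (g (B ∪ {a}) - g B) := by
  induction T using Finset.induction_on with
  | empty => intro _ B _; simp
  | @insert a T haT ih =>
    intro hT B hB
    have haN : a ∈ N := hT (Finset.mem_insert_self a T)
    have hT' : T ⊆ N := fun x hx => hT (Finset.mem_insert_of_mem hx)
    by_cases haB : a ∈ B
    · have h1 : B ∪ insert a T = B ∪ T := by
        rw [Finset.union_insert, Finset.insert_eq_self]
        exact Finset.mem_union_left T haB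
      rw [h1, Finset.insert_sdiff_of_mem T haB]
      exact ih hT' B hB
    · have hBT : B ∪ T ⊆ N := Finset.union_subset hB hT'
      have haBT : a ∉ B ∪ T := by simp [haB, haT]
      have hsm := hsub B (B ∪ T) (Finset.subset_union_left) hBT a haN haBT
      have hins : B ∪ insert a T = (B ∪ T) ∪ {a} := by
        rw [Finset.union_insert, Finset.insert_eq, Finset.union_comm]
      have hsd : (insert a T) \ B = insert a (T \ B) :=
        Finset.insert_sdiff_of_notMem T haB
      rw [hins, hsd, Finset.sum_insert (by simp [haT])]
      have := ih hT' B hB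
      linarith

theorem greedy_one_sub_inv_e {α : Type*} [DecidableEq α] (N : Finset α)
    (g : Finset α → ℝ) (hsub : SubmodularOn N g) (hmono : MonotoneSetFn N g)
    (hempty : g ∅ = 0) (k : ℕ) (hk : 1 ≤ k)
    (S : ℕ → Finset α) (s : ℕ → α) (hS0 : S 0 = ∅)
    (hgreedy : ∀ i < k, s i ∈ N ∧ S (i + 1) = S i ∪ {s i} ∧
      ∀ t ∈ N, g (S i ∪ {t}) ≤ g (S i ∪ {s i})) :
    ∀ A ⊆ N, A.card = k → (1 - 1 / Real.exp 1) * g A ≤ g (S k) := by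
  intro A hA hAcard
  have hk0 : (0:ℝ) < (k:ℝ) := by exact_mod_cast Nat.lt_of_lt_of_le Nat.zero_lt_one hk
  -- S i ⊆ N for i ≤ k
  have hSsub : ∀ i ≤ k, S i ⊆ N := by
    intro i
    induction i with
    | zero => intro _; rw [hS0]; exact Finset.empty_subset N
    | succ j ihj =>
      intro hjk
      have hjk' : j < k := hjk
      obtain ⟨hsN, hSeq, _⟩ := hgreedy j hjk'
      rw [hSeq]
      exact Finset.union_subset (ihj (le_of_lt hjk')) (by simpa using hsN)
  have hstep : ∀ i < k, g A - g (S (i+1)) ≤ (1 - 1/(k:ℝ)) * (g A - g (S i)) := by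
    intro i hi
    obtain ⟨hsN, hSeq, hmax⟩ := hgreedy i hi
    have hSiN : S i ⊆ N := hSsub i (le_of_lt hi)
    have hSi1N : S (i+1) ⊆ N := hSsub (i+1) hi
    have hdelta0 : 0 ≤ g (S (i+1)) - g (S i) := by
      have := hmono (S i) (S (i+1)) (by rw [hSeq]; exact Finset.subset_union_left) hSi1N
      linarith
    have hgain : g A - g (S i) ≤ (k:ℝ) * (g (S (i+1)) - g (S i)) := by
      have h1 : g A ≤ g (S i ∪ A) :=
        hmono A (S i ∪ A) Finset.subset_union_right (Finset.union_subset hSiN hA)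
      have h2 : g (S i ∪ A) - g (S i) ≤ ∑ a ∈ A \ S i, (g (S i ∪ {a}) - g (S i)) :=
        marginal_sum N g hsub A hA (S i) hSiN
      have h3 : ∑ a ∈ A \ S i, (g (S i ∪ {a}) - g (S i))
          ≤ (A \ S i).card • (g (S (i+1)) - g (S i)) := by
        apply Finset.sum_le_card_nsmul
        intro a ha
        have haN : a ∈ N := hA (Finset.mem_sdiff.mp ha).1
        have := hmax a haN
        rw [hSeq]
        linarith
      have hcard : ((A \ S i).card : ℝ) ≤ (k:ℝ) := by
        exact_mod_cast hAcard ▸ Finset.card_le_card (Finset.sdiff_subset)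
      have h4 : ((A \ S i).card : ℝ) * (g (S (i+1)) - g (S i))
          ≤ (k:ℝ) * (g (S (i+1)) - g (S i)) :=
        mul_le_mul_of_nonneg_right hcard hdelta0
      rw [nsmul_eq_mul] at h3
      linarith
    have hdiv : (g A - g (S i)) / (k:ℝ) ≤ g (S (i+1)) - g (S i) :=
      (div_le_iff₀ hk0).mpr (by linarith)
    have hexp : (1 - 1/(k:ℝ)) * (g A - g (S i))
        = (g A - g (S i)) - (g A - g (S i)) / (k:ℝ) := by ring
    rw [hexp]
    linarith
  have h1k : 0 ≤ 1 - 1/(k:ℝ) := by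
    have : 1/(k:ℝ) ≤ 1 := by
      rw [div_le_one hk0]; exact_mod_cast hk
    linarith
  have hiter : ∀ i ≤ k, g A - g (S i) ≤ (1 - 1/(k:ℝ))^i * g A := by
    intro i
    induction i with
    | zero => intro _; simp [hS0, hempty]
    | succ j ihj =>
      intro hjk
      have hjk' : j < k := hjk
      calc g A - g (S (j+1)) ≤ (1 - 1/(k:ℝ)) * (g A - g (S j)) := hstep j hjk'
        _ ≤ (1 - 1/(k:ℝ)) * ((1 - 1/(k:ℝ))^j * g A) :=
            mul_le_mul_of_nonneg_left (ihj (le_of_lt hjk')) h1k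
        _ = (1 - 1/(k:ℝ))^(j+1) * g A := by ring
  have hgA0 : 0 ≤ g A := hempty ▸ hmono ∅ A (Finset.empty_subset A) hA
  have hpow : (1 - 1/(k:ℝ))^k ≤ 1 / Real.exp 1 := by
    have h1 : (1:ℝ) - 1/(k:ℝ) ≤ Real.exp (-(1/(k:ℝ))) := by
      have := Real.add_one_le_exp (-(1/(k:ℝ)))
      linarith
    calc (1 - 1/(k:ℝ))^k ≤ (Real.exp (-(1/(k:ℝ))))^k := pow_le_pow_left₀ h1k h1 k
      _ = Real.exp ((k:ℝ) * (-(1/(k:ℝ)))) := by rw [Real.exp_nat_mul]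
      _ = Real.exp (-1) := by
          congr 1
          field_simp
      _ = 1 / Real.exp 1 := by rw [Real.exp_neg]; exact (one_div _).symm
  have hf := hiter k le_rfl
  have hfin : (1 - 1/(k:ℝ))^k * g A ≤ (1 / Real.exp 1) * g A :=
    mul_le_mul_of_nonneg_right hpow hgA0
  linarith
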